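/- Let G be a group, A ⊆ G a nonempty finite set, and δ ∈ (0,1/2). Let X = St^ℓ_{δ²/2}(A), let ν ∈ (0,1) satisfy ν ≤ |X|/|A|, let S = St^r_{δν}(A), and let A' = {a ∈ A : |Xa \ A| < δ|X|}. Then (1 − 2δ)|A'S| ≤ |A|. -/

import Mathlib

open scoped Pointwise symmDiff

/-- `Stab^ℓ_N(A) = {x : |xA △ A| ≤ N}`. -/
def stabL {G : Type*} [Group G] (A : Set G) (N : ℝ) : Set G :=
  {x : G | (((x • A) ∆ A).ncard : ℝ) ≤ N}

/-- `Stab^r_N(A) = {x : |Ax △ A| ≤ N}`. -/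
def stabR {G : Type*} [Group G] (A : Set G) (N : ℝ) : Set G :=
  {x : G | (((A * {x}) ∆ A).ncard : ℝ) ≤ N}

/-- `St^ℓ_ε(A) = Stab^ℓ_{ε|A|}(A)`. -/
def stL {G : Type*} [Group G] (A : Set G) (ε : ℝ) : Set G := stabL A (ε * A.ncard)

/-- `St^r_ε(A) = Stab^r_{ε|A|}(A)`. -/
def stR {G : Type*} [Group G] (A : Set G) (ε : ℝ) : Set G := stabR A (ε * A.ncard)

/-- A family of sets shatters `S` if every subset of `S` is cut out by a member of the family. -/
def Shatters {α : Type*} (F : Set (Set α)) (S : Set α) : Prop :=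
  ∀ T ⊆ S, ∃ f ∈ F, S ∩ f = T

/-- VC-dimension of a set system: the supremum of cardinalities of finite shattered sets. -/
noncomputable def vcDim {α : Type*} (F : Set (Set α)) : ℕ∞ :=
  ⨆ (S : Finset α) (_ : Shatters F ↑S), (S.card : ℕ∞)

/-- The family of left translates `{xA : x ∈ B}`. -/
def leftFam {G : Type*} [Group G] (A B : Set G) : Set (Set G) := (fun x => x • A) '' B

/-- The family of right translates `{Ax : x ∈ B}`. -/
def rightFam {G : Type*} [Group G] (A B : Set G) : Set (Set G) := (fun x => A * {x}) '' B

/-- `Z^ℓ_ε(A,X) = {g : min(|gX ∩ A|, |gX \ A|) ≥ ε|X|}`. -/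
def Zl {G : Type*} [Group G] (A X : Set G) (ε : ℝ) : Set G :=
  {g : G | ε * X.ncard ≤ min (((g • X) ∩ A).ncard : ℝ) (((g • X) \ A).ncard : ℝ)}

/-- Claim 2 in Lemma 3.4 of the paper: with `X = St^ℓ_{δ²/2}(A)`,
`ν ≤ |X|/|A|`, `S = St^r_{δν}(A)` and `A' = {a ∈ A : |Xa \ A| < δ|X|}`, one has
`(1 - 2δ)|A'S| ≤ |A|`. -/
theorem structure_claim2 {G : Type*} [Group G] (A : Set G)
    (hA : A.Finite) (hAne : A.Nonempty)
    (δ : ℝ) (hδ0 : 0 < δ) (hδ1 : δ < 1 / 2)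
    (ν : ℝ) (hν0 : 0 < ν) (hν1 : ν < 1)
    (X S A' : Set G) (hX : X = stL A (δ ^ 2 / 2))
    (hν : ν ≤ (X.ncard : ℝ) / A.ncard)
    (hS : S = stR A (δ * ν))
    (hA' : A' = {a ∈ A | (((X * {a}) \ A).ncard : ℝ) < δ * X.ncard}) :
    (1 - 2 * δ) * ((A' * S).ncard : ℝ) ≤ (A.ncard : ℝ) := by
  classical
  have hA0 : (0:ℝ) < A.ncard := by exact_mod_cast (Set.ncard_pos hA).mpr hAne
  -- X is contained in A * A⁻¹, hence finite
  have hXsub : X ⊆ A * A⁻¹ := by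
    intro x hx
    rw [hX] at hx
    simp only [stL, stabL, Set.mem_setOf_eq] at hx
    by_contra hmem
    have hdisj : Disjoint (x • A) A := by
      rw [Set.disjoint_left]
      rintro y ⟨a, ha, rfl⟩ hyA
      exact hmem (by simpa [smul_eq_mul, mul_assoc] using
        Set.mul_mem_mul hyA (Set.inv_mem_inv.mpr ha))
    have hsd : (x • A) ∆ A = (x • A) ∪ A := hdisj.symmDiff_eq_sup
    rw [hsd, Set.ncard_union_eq hdisj (hA.smul_set) hA, Set.ncard_smul_set] at hx
    push_cast at hx
    have h2 : δ^2/2 * (A.ncard:ℝ) < 2 * A.ncard :=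
      mul_lt_mul_of_pos_right (by nlinarith) hA0
    linarith
  have hXfin : X.Finite := (hA.mul hA.inv).subset hXsub
  -- S is contained in A⁻¹ * A, hence finite
  have hSsub : S ⊆ A⁻¹ * A := by
    intro s hs
    rw [hS] at hs
    simp only [stR, stabR, Set.mem_setOf_eq] at hs
    by_contra hmem
    have hdisj : Disjoint (A * {s}) A := by
      rw [Set.disjoint_left]
      rintro y hy hyA
      rw [Set.mul_singleton] at hy
      obtain ⟨a, ha, rfl⟩ := hy
      exact hmem (by simpa [mul_assoc] using
        Set.mul_mem_mul (Set.inv_mem_inv.mpr ha) hyA)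
    have hcardAs : (A * {s}).ncard = A.ncard := by
      rw [Set.mul_singleton]
      exact Set.ncard_image_of_injective _ (mul_left_injective s)
    have hsd : (A * {s}) ∆ A = (A * {s}) ∪ A := hdisj.symmDiff_eq_sup
    rw [hsd, Set.ncard_union_eq hdisj (hA.mul (Set.finite_singleton s)) hA, hcardAs] at hs
    push_cast at hs
    have h2 : δ * ν * (A.ncard:ℝ) < 2 * A.ncard :=
      mul_lt_mul_of_pos_right (by nlinarith) hA0
    linarith
  have hSfin : S.Finite := (hA.inv.mul hA).subset hSsub
  have hA'sub : A' ⊆ A := by rw [hA']; exact fun a ha => ha.1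
  have hA'fin : A'.Finite := hA.subset hA'sub
  have hTfin : (A' * S).Finite := hA'fin.mul hSfin
  -- X is nonempty (contains 1)
  have h1X : (1:G) ∈ X := by
    rw [hX]
    simp only [stL, stabL, Set.mem_setOf_eq, one_smul, symmDiff_self,
      Set.bot_eq_empty, Set.ncard_empty, Nat.cast_zero]
    positivity
  have hX0 : (0:ℝ) < X.ncard := by exact_mod_cast (Set.ncard_pos hXfin).mpr ⟨1, h1X⟩
  have hνA : ν * A.ncard ≤ X.ncard := (le_div_iff₀ hA0).mp hν
  -- a key cardinality fact: |X * {g}| = |X|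
  have hXg : ∀ g : G, (X * {g}).ncard = X.ncard := fun g => by
    rw [Set.mul_singleton]
    exact Set.ncard_image_of_injective _ (mul_left_injective g)
  -- the key pointwise bound
  have key : ∀ g ∈ A' * S, (1 - 2*δ) * X.ncard ≤ (((X * {g}) ∩ A).ncard : ℝ) := by
    rintro g ⟨a, ha, s, hs, rfl⟩
    have haA' : a ∈ A ∧ (((X * {a}) \ A).ncard : ℝ) < δ * X.ncard := by
      rw [hA'] at ha; exact ha
    have hsS : (((A * {s}) ∆ A).ncard : ℝ) ≤ δ * ν * A.ncard := by
      rw [hS] at hs; exact hs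
    have hsub2 : (X * {a*s}) \ A ⊆ ((X * {a}) \ A) * {s} ∪ ((A * {s}) \ A) := by
      rintro y ⟨hy1, hy2⟩
      rw [Set.mul_singleton] at hy1
      obtain ⟨x, hx, rfl⟩ := hy1
      by_cases hcase : x * (a*s) ∈ A * {s}
      · exact Or.inr ⟨hcase, hy2⟩
      · left
        rw [Set.mul_singleton]
        refine ⟨x * a, ⟨?_, fun hxa => hcase ?_⟩, by group⟩
        · rw [Set.mul_singleton]; exact ⟨x, hx, rfl⟩
        · rw [Set.mul_singleton]; exact ⟨x*a, hxa, by group⟩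
    have f1 : ((X * {a}) \ A).Finite := (hXfin.mul (Set.finite_singleton a)).diff
    have f2 : ((A * {s}) \ A).Finite := (hA.mul (Set.finite_singleton s)).diff
    have e1 : (((X * {a}) \ A) * {s}).ncard = ((X * {a}) \ A).ncard := by
      rw [Set.mul_singleton]
      exact Set.ncard_image_of_injective _ (mul_left_injective s)
    have hd : ((X * {a*s}) \ A).ncard ≤ ((X * {a}) \ A).ncard + ((A * {s}) \ A).ncard := by
      calc ((X * {a*s}) \ A).ncard ≤ ((((X * {a}) \ A) * {s}) ∪ ((A * {s}) \ A)).ncard :=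
            Set.ncard_le_ncard hsub2
              (((f1.mul (Set.finite_singleton s))).union f2)
        _ ≤ (((X * {a}) \ A) * {s}).ncard + ((A * {s}) \ A).ncard := Set.ncard_union_le _ _
        _ = _ := by rw [e1]
    have b2 : (((A * {s}) \ A).ncard : ℝ) ≤ δ * X.ncard := by
      have hsub3 : (A * {s}) \ A ⊆ (A * {s}) ∆ A := by
        rw [Set.symmDiff_def]; exact Set.subset_union_left
      have hfin3 : ((A * {s}) ∆ A).Finite :=
        (((hA.mul (Set.finite_singleton s))).union hA).subset symmDiff_le_sup
      have := Set.ncard_le_ncard hsub3 hfin3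
      have h2 : δ * ν * A.ncard ≤ δ * X.ncard := by
        rw [mul_assoc]; exact mul_le_mul_of_nonneg_left hνA hδ0.le
      calc (((A * {s}) \ A).ncard : ℝ) ≤ (((A * {s}) ∆ A).ncard : ℝ) := by exact_mod_cast this
        _ ≤ δ * ν * A.ncard := hsS
        _ ≤ δ * X.ncard := h2
    have hsplit : ((X * {a*s}) ∩ A).ncard + ((X * {a*s}) \ A).ncard = (X * {a*s}).ncard :=
      Set.ncard_inter_add_ncard_diff_eq_ncard _ _ (hXfin.mul (Set.finite_singleton _))
    have hXg' := hXg (a*s)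
    have b1 := haA'.2
    have hd' : (((X * {a*s}) \ A).ncard : ℝ) ≤ (((X * {a}) \ A).ncard : ℝ) + ((A * {s}) \ A).ncard := by
      exact_mod_cast hd
    have hsplit' : (((X * {a*s}) ∩ A).ncard : ℝ) + ((X * {a*s}) \ A).ncard = X.ncard := by
      rw [← hXg']; exact_mod_cast hsplit
    linarith
  -- double counting
  set T := hTfin.toFinset with hT
  set AF := hA.toFinset with hAF
  set XF := hXfin.toFinset with hXF
  have hcount : ∀ g : G, ((X * {g}) ∩ A).ncard = (AF.filter fun y => y * g⁻¹ ∈ X).card := by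
    intro g
    rw [← Set.ncard_coe_finset]
    congr 1
    ext y
    simp only [Finset.coe_filter, Set.mem_setOf_eq, Set.mem_inter_iff, Set.mul_singleton,
      Set.mem_image, hAF, Set.Finite.mem_toFinset]
    constructor
    · rintro ⟨⟨x, hx, rfl⟩, hy⟩
      exact ⟨hy, by simpa using hx⟩
    · rintro ⟨hy, hx⟩
      exact ⟨⟨y * g⁻¹, hx, by group⟩, hy⟩
  have hsum2 : ∑ g ∈ T, (AF.filter fun y => y * g⁻¹ ∈ X).card ≤ AF.card * XF.card := by
    have h1 : ∑ g ∈ T, (AF.filter fun y => y * g⁻¹ ∈ X).card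
        = ∑ y ∈ AF, ∑ g ∈ T, if y * g⁻¹ ∈ X then 1 else 0 := by
      simp only [Finset.card_filter]
      exact Finset.sum_comm
    rw [h1]
    have hb : ∀ y ∈ AF, (∑ g ∈ T, if y * g⁻¹ ∈ X then 1 else 0) ≤ XF.card := by
      intro y _
      rw [← Finset.card_filter]
      apply Finset.card_le_card_of_injOn (fun g => y * g⁻¹)
      · intro g hg
        simp only [Finset.mem_coe, Finset.mem_filter] at hg
        simpa [hXF, Set.Finite.mem_toFinset] using hg.2
      · intro g₁ _ g₂ _ h
        have := mul_left_cancel h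
        exact inv_injective this
    calc ∑ y ∈ AF, (∑ g ∈ T, if y * g⁻¹ ∈ X then 1 else 0) ≤ ∑ _y ∈ AF, XF.card :=
          Finset.sum_le_sum hb
      _ = AF.card * XF.card := by rw [Finset.sum_const, smul_eq_mul]
  have hcardT : ((A' * S).ncard : ℝ) = T.card := by
    rw [Set.ncard_eq_toFinset_card _ hTfin]
  have hcardA : (A.ncard : ℝ) = AF.card := by rw [Set.ncard_eq_toFinset_card _ hA]
  have hcardX : (X.ncard : ℝ) = XF.card := by rw [Set.ncard_eq_toFinset_card _ hXfin]
  have hmain : (1 - 2*δ) * X.ncard * T.card ≤ (X.ncard : ℝ) * A.ncard := by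
    calc (1 - 2*δ) * X.ncard * T.card = ∑ _g ∈ T, (1 - 2*δ) * X.ncard := by
          rw [Finset.sum_const, nsmul_eq_mul]; ring
      _ ≤ ∑ g ∈ T, (((X * {g}) ∩ A).ncard : ℝ) := by
          apply Finset.sum_le_sum
          intro g hg
          exact key g (by simpa [hT, Set.Finite.mem_toFinset] using hg)
      _ ≤ (X.ncard : ℝ) * A.ncard := by
          have : ∑ g ∈ T, (((X * {g}) ∩ A).ncard : ℝ)
              = ((∑ g ∈ T, (AF.filter fun y => y * g⁻¹ ∈ X).card : ℕ) : ℝ) := by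
            push_cast
            exact Finset.sum_congr rfl fun g _ => by rw [hcount g]
          rw [this, hcardA, hcardX]
          have := hsum2
          calc ((∑ g ∈ T, (AF.filter fun y => y * g⁻¹ ∈ X).card : ℕ) : ℝ)
              ≤ ((AF.card * XF.card : ℕ) : ℝ) := by exact_mod_cast this
            _ = (XF.card : ℝ) * AF.card := by push_cast; ring
  rw [hcardT]
  have := hmain
  nlinarith [hX0, this]
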